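/- For p < 1/2 and n ≥ 2, ∏_{j=1}^{n−1} ((2/(n−j+1))p + 1 − 2/(n−j+1)) < 1/n. -/

import Mathlib

lemma tele_prod (m : ℕ) :
    ∏ j ∈ Finset.range m, (((m : ℝ) - j) / ((m : ℝ) + 1 - j)) = 1 / ((m : ℝ) + 1) := by
  induction m with
  | zero => simp
  | succ m ih =>
    rw [Finset.prod_range_succ']
    push_cast
    have h1 : ∀ j ∈ Finset.range m,
        ((m : ℝ) + 1 - ((j : ℝ) + 1)) / ((m : ℝ) + 1 + 1 - ((j : ℝ) + 1))
          = ((m : ℝ) - j) / ((m : ℝ) + 1 - j) := by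
      intro j hj
      ring_nf
    rw [Finset.prod_congr rfl h1, ih]
    push_cast
    have hm1 : (m : ℝ) + 1 ≠ 0 := by positivity
    have hm2 : (m : ℝ) + 2 ≠ 0 := by positivity
    field_simp
    rw [sub_zero, sub_zero, mul_div_assoc, div_self (by positivity), mul_one]

theorem stmt_13 (n : ℕ) (hn : 2 ≤ n) (p : ℝ) (hp : p ∈ Set.Ioo (0 : ℝ) (1/2)) :
    ∏ j ∈ Finset.range (n - 1), ((2 / ((n : ℝ) - j)) * p + 1 - 2 / ((n : ℝ) - j)) < 1 / n := by
  obtain ⟨hp0, hp2⟩ := hp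
  have key : ∀ j ∈ Finset.range (n - 1), (2 : ℝ) ≤ (n : ℝ) - j := by
    intro j hj
    rw [Finset.mem_range] at hj
    have : j + 2 ≤ n := by omega
    have := Nat.cast_le (α := ℝ) |>.mpr this
    push_cast at this
    linarith
  have hlt : ∏ j ∈ Finset.range (n - 1), ((2 / ((n : ℝ) - j)) * p + 1 - 2 / ((n : ℝ) - j))
      < ∏ j ∈ Finset.range (n - 1), (((n : ℝ) - j - 1) / ((n : ℝ) - j)) := by
    apply Finset.prod_lt_prod_of_nonempty
    · intro j hj
      have h2 := key j hj
      have hd : (0 : ℝ) < (n : ℝ) - j := by linarith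
      have h1 : 2 / ((n : ℝ) - j) ≤ 1 := by
        rw [div_le_one hd]; linarith
      have : 0 < 2 / ((n : ℝ) - j) * p := by positivity
      linarith
    · intro j hj
      have h2 := key j hj
      have hd : (0 : ℝ) < (n : ℝ) - j := by linarith
      have hA : (2 / ((n : ℝ) - j) * p + 1 - 2 / ((n : ℝ) - j)) * ((n : ℝ) - j)
          = 2 * p + ((n : ℝ) - j) - 2 := by
        field_simp
      rw [lt_div_iff₀ hd, hA]
      linarith
    · rw [Finset.nonempty_range_iff]
      omega
  have hne : n - 1 + 1 = n := by omega
  have heq : ∏ j ∈ Finset.range (n - 1), (((n : ℝ) - j - 1) / ((n : ℝ) - j)) = 1 / n := by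
    have := tele_prod (n - 1)
    have hcast : ((n - 1 : ℕ) : ℝ) = (n : ℝ) - 1 := by
      have : (1 : ℕ) ≤ n := by omega
      push_cast [this]
      ring
    rw [hcast] at this
    convert this using 2 with j
    · ring_nf
    · ring
  rw [heq] at hlt
  exact hlt
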